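/- For every positive integer n, the number 2^{n(n-1)/2} \prod_{i=0}^{n-1} \frac{(4i+2)!}{(n+2i+1)!} is a positive integer. -/

import Mathlib

open Finset

private lemma indSum (t n : ℕ) : (∑ j ∈ range n, if t ≤ j then 1 else 0) = n - t := by
  induction n with
  | zero => simp
  | succ n ih => rw [Finset.sum_range_succ, ih]; split <;> omega

private lemma modPeriodSum (q a c : ℕ) (hq : 0 < q) (hc : Nat.gcd q c = 1) :
    ∑ t ∈ range q, (a + c * t) % q = ∑ t ∈ range q, t := by
  have hinj : ∀ x ∈ range q, ∀ y ∈ range q,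
      (a + c * x) % q = (a + c * y) % q → x = y := by
    intro x hx y hy h
    simp only [Finset.mem_range] at hx hy
    have h1 : a + c * x ≡ a + c * y [MOD q] := h
    have h2 : c * x ≡ c * y [MOD q] := Nat.ModEq.add_left_cancel' a h1
    have h3 : x ≡ y [MOD q] := Nat.ModEq.cancel_left_of_coprime hc h2
    unfold Nat.ModEq at h3
    rwa [Nat.mod_eq_of_lt hx, Nat.mod_eq_of_lt hy] at h3
  have himg : (range q).image (fun t => (a + c * t) % q) = range q := by
    apply Finset.eq_of_subset_of_card_le
    · intro x hx
      simp only [Finset.mem_image, Finset.mem_range] at hx ⊢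
      obtain ⟨t, _, rfl⟩ := hx
      exact Nat.mod_lt _ hq
    · rw [Finset.card_image_of_injOn (fun x hx y hy h =>
        hinj x (by simpa using hx) y (by simpa using hy) h)]
  have := Finset.sum_image (g := fun t => (a + c * t) % q) (f := fun x => x)
    (s := range q) hinj
  rw [himg] at this
  exact this.symm

private lemma floorPeriodSum (q a c : ℕ) (hq : Odd q) (hc : Nat.gcd q c = 1)
    (hc1 : 1 ≤ c) :
    ∑ t ∈ range q, (a + c * t) / q = a + (c - 1) * ((q - 1) / 2) := by
  obtain ⟨e, he⟩ := hq
  obtain ⟨d, rfl⟩ : ∃ d, c = d + 1 := ⟨c - 1, by omega⟩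
  have hq0 : 0 < q := by omega
  have hgauss : (∑ t ∈ range q, t) * 2 = q * (q - 1) := Finset.sum_range_id_mul_two q
  have hq1 : q * (q - 1) = (q * e) * 2 := by
    have h : q - 1 = 2 * e := by omega
    rw [h]; ring
  have hT : (∑ t ∈ range q, t) = q * e := by omega
  have hsum : ∑ t ∈ range q, (a + (d + 1) * t) = q * a + (d + 1) * (q * e) := by
    rw [Finset.sum_add_distrib, Finset.sum_const, card_range, ← Finset.mul_sum, hT]
    ring
  have hdm : q * (∑ t ∈ range q, (a + (d + 1) * t) / q)
      + ∑ t ∈ range q, (a + (d + 1) * t) % q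
      = ∑ t ∈ range q, (a + (d + 1) * t) := by
    rw [Finset.mul_sum, ← Finset.sum_add_distrib]
    exact Finset.sum_congr rfl fun t _ => Nat.div_add_mod _ q
  rw [modPeriodSum q a (d + 1) hq0 hc, hT, hsum] at hdm
  have h2 : q * a + (d + 1) * (q * e) = q * (a + d * e) + q * e := by ring
  have h3 : q * (∑ t ∈ range q, (a + (d + 1) * t) / q) = q * (a + d * e) := by omega
  have h4 := Nat.eq_of_mul_eq_mul_left hq0 h3
  rw [h4]
  have h5 : (q - 1) / 2 = e := by omega
  rw [h5]
  have h6 : d + 1 - 1 = d := by omega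
  rw [h6]


-- base case building blocks
private lemma numTerm (q j : ℕ) (hq : Odd q) (hj : j < q) :
    (4 * j + 2) / q = (if (q + 1) / 4 ≤ j then 1 else 0)
      + (if (2 * q + 1) / 4 ≤ j then 1 else 0)
      + (if (3 * q + 1) / 4 ≤ j then 1 else 0) := by
  obtain ⟨e, he⟩ := hq
  have hdm := Nat.div_add_mod (4 * j + 2) q
  have hmlt : (4 * j + 2) % q < q := Nat.mod_lt _ (by omega)
  set d := (4 * j + 2) / q with hd
  have hd4 : d < 4 := by
    by_contra h
    push_neg at h
    have : 4 * q ≤ q * d := by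
      calc 4 * q = q * 4 := by ring
      _ ≤ q * d := Nat.mul_le_mul_left q h
    omega
  interval_cases d <;> split_ifs <;> omega

private lemma denTerm (q n j : ℕ) (hq : Odd q) (hn : n < q) (hj : j < n) :
    (n + 2 * j + 1) / q = (if (q - n) / 2 ≤ j then 1 else 0)
      + (if (2 * q - n) / 2 ≤ j then 1 else 0) := by
  obtain ⟨e, he⟩ := hq
  have hdm := Nat.div_add_mod (n + 2 * j + 1) q
  have hmlt : (n + 2 * j + 1) % q < q := Nat.mod_lt _ (by omega)
  set d := (n + 2 * j + 1) / q with hd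
  have hd3 : d < 3 := by
    by_contra h
    push_neg at h
    have : 3 * q ≤ q * d := by
      calc 3 * q = q * 3 := by ring
      _ ≤ q * d := Nat.mul_le_mul_left q h
    omega
  interval_cases d <;> split_ifs <;> omega

private lemma keyBase (q n : ℕ) (hq : Odd q) (hn : n < q) :
    ∑ i ∈ range n, (n + 2 * i + 1) / q ≤ ∑ i ∈ range n, (4 * i + 2) / q := by
  have hN : ∑ i ∈ range n, (4 * i + 2) / q
      = (n - (q + 1) / 4) + ((n - (2 * q + 1) / 4) + (n - (3 * q + 1) / 4)) := by
    rw [← indSum ((q + 1) / 4) n, ← indSum ((2 * q + 1) / 4) n,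
      ← indSum ((3 * q + 1) / 4) n, ← Finset.sum_add_distrib, ← Finset.sum_add_distrib]
    exact Finset.sum_congr rfl fun j hj => by
      rw [numTerm q j hq (lt_trans (Finset.mem_range.mp hj) hn)]; ring
  have hD : ∑ i ∈ range n, (n + 2 * i + 1) / q
      = (n - (q - n) / 2) + (n - (2 * q - n) / 2) := by
    rw [← indSum ((q - n) / 2) n, ← indSum ((2 * q - n) / 2) n, ← Finset.sum_add_distrib]
    exact Finset.sum_congr rfl fun j hj =>
      denTerm q n j hq hn (Finset.mem_range.mp hj)
  rw [hN, hD]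
  obtain ⟨e, he⟩ := hq
  omega

private lemma keyLemma (q : ℕ) (hq : Odd q) (n : ℕ) :
    ∑ i ∈ range n, (n + 2 * i + 1) / q ≤ ∑ i ∈ range n, (4 * i + 2) / q := by
  induction n using Nat.strong_induction_on with
  | _ n ih =>
    rcases lt_or_ge n q with h | h
    · exact keyBase q n hq h
    · have hq0 : 0 < q := hq.pos
      obtain ⟨m, rfl⟩ : ∃ m, n = m + q := ⟨n - q, by omega⟩
      obtain ⟨e, he⟩ := hq
      have hq2 : q % 2 = 1 := by omega
      have hg2 : Nat.gcd q 2 = 1 := by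
        rw [Nat.gcd_comm, Nat.gcd_rec, hq2]
        simp
      have hg4 : Nat.gcd q 4 = 1 := by
        have : (4 : ℕ) = 2 * 2 := rfl
        rw [this]
        exact Nat.Coprime.mul_right hg2 hg2
      -- numerator side
      have hNum : ∑ i ∈ range (m + q), (4 * i + 2) / q
          = (∑ i ∈ range m, (4 * i + 2) / q) + ((4 * m + 2) + 3 * ((q - 1) / 2)) := by
        rw [Finset.sum_range_add]
        congr 1
        have := floorPeriodSum q (4 * m + 2) 4 ⟨e, he⟩ hg4 (by norm_num)
        rw [← this]
        exact Finset.sum_congr rfl fun t _ => by congr 1; ring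
      -- denominator side
      have hDen : ∑ i ∈ range (m + q), ((m + q) + 2 * i + 1) / q
          = (∑ i ∈ range m, (m + 2 * i + 1) / q)
            + ((m + q) + ((3 * m + 1) + (q - 1) / 2)) := by
        have hstep : ∀ i, ((m + q) + 2 * i + 1) / q = (m + 2 * i + 1) / q + 1 := by
          intro i
          have : (m + q) + 2 * i + 1 = (m + 2 * i + 1) + q := by ring
          rw [this, Nat.add_div_right _ hq0]
        calc ∑ i ∈ range (m + q), ((m + q) + 2 * i + 1) / q
            = ∑ i ∈ range (m + q), ((m + 2 * i + 1) / q + 1) :=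
              Finset.sum_congr rfl fun i _ => hstep i
          _ = (∑ i ∈ range (m + q), (m + 2 * i + 1) / q) + (m + q) := by
              rw [Finset.sum_add_distrib, Finset.sum_const, card_range, smul_eq_mul, mul_one]
          _ = ((∑ i ∈ range m, (m + 2 * i + 1) / q)
              + ∑ i ∈ range q, (m + 2 * (m + i) + 1) / q) + (m + q) := by
              rw [Finset.sum_range_add]
          _ = _ := by
              have := floorPeriodSum q (3 * m + 1) 2 ⟨e, he⟩ hg2 (by norm_num)
              have h2 : ∑ i ∈ range q, (m + 2 * (m + i) + 1) / q
                  = (3 * m + 1) + 1 * ((q - 1) / 2) := by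
                rw [← this]
                exact Finset.sum_congr rfl fun t _ => by congr 1; ring
              rw [h2]; ring
      rw [hNum, hDen]
      have hih := ih m (by omega)
      omega

private lemma s2_le (m : ℕ) : (Nat.digits 2 m).sum ≤ m := by
  induction m using Nat.strong_induction_on with
  | _ m ih =>
    rcases Nat.eq_zero_or_pos m with rfl | hm
    · simp
    · rw [Nat.digits_def' (by norm_num : (1:ℕ) < 2) hm]
      simp only [List.sum_cons]
      have := ih (m / 2) (by omega)
      omega

private lemma s2_pos (m : ℕ) (hm : 0 < m) : 1 ≤ (Nat.digits 2 m).sum := by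
  induction m using Nat.strong_induction_on with
  | _ m ih =>
    rw [Nat.digits_def' (by norm_num : (1:ℕ) < 2) hm]
    simp only [List.sum_cons]
    rcases Nat.eq_zero_or_pos (m % 2) with h | h
    · have h2 : 0 < m / 2 := by omega
      have := ih (m / 2) (by omega) h2
      omega
    · omega

private lemma s2_42 (i : ℕ) :
    (Nat.digits 2 (4 * i + 2)).sum = (Nat.digits 2 i).sum + 1 := by
  rw [Nat.digits_def' (by norm_num : (1:ℕ) < 2) (by omega : 0 < 4 * i + 2)]
  have h1 : (4 * i + 2) % 2 = 0 := by omega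
  have h2 : (4 * i + 2) / 2 = 2 * i + 1 := by omega
  rw [h1, h2, Nat.digits_def' (by norm_num : (1:ℕ) < 2) (by omega : 0 < 2 * i + 1)]
  have h3 : (2 * i + 1) % 2 = 1 := by omega
  have h4 : (2 * i + 1) / 2 = i := by omega
  rw [h3, h4]
  simp [Nat.add_comm]

private lemma val2 (n : ℕ) :
    ∑ i ∈ range n, padicValNat 2 (Nat.factorial (n + 2 * i + 1))
      ≤ n * (n - 1) / 2 + ∑ i ∈ range n, padicValNat 2 (Nat.factorial (4 * i + 2)) := by
  haveI : Fact (Nat.Prime 2) := ⟨Nat.prime_two⟩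
  have hleg : ∀ m : ℕ, m = padicValNat 2 (Nat.factorial m) + (Nat.digits 2 m).sum := by
    intro m
    have h := sub_one_mul_padicValNat_factorial (p := 2) m
    have hs := s2_le m
    omega
  have hA : ∑ i ∈ range n, (n + 2 * i + 1)
      = (∑ i ∈ range n, padicValNat 2 (Nat.factorial (n + 2 * i + 1)))
        + ∑ i ∈ range n, (Nat.digits 2 (n + 2 * i + 1)).sum := by
    rw [← Finset.sum_add_distrib]
    exact Finset.sum_congr rfl fun i _ => hleg _
  have hB : ∑ i ∈ range n, (4 * i + 2)
      = (∑ i ∈ range n, padicValNat 2 (Nat.factorial (4 * i + 2)))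
        + ∑ i ∈ range n, (Nat.digits 2 (4 * i + 2)).sum := by
    rw [← Finset.sum_add_distrib]
    exact Finset.sum_congr rfl fun i _ => hleg _
  have hgauss : (∑ i ∈ range n, i) * 2 = n * (n - 1) := Finset.sum_range_id_mul_two n
  have hAB : ∑ i ∈ range n, (n + 2 * i + 1) = ∑ i ∈ range n, (4 * i + 2) := by
    have h1 : ∑ i ∈ range n, (n + 2 * i + 1) = n * n + 2 * (∑ i ∈ range n, i) + n := by
      rw [Finset.sum_add_distrib, Finset.sum_add_distrib, Finset.sum_const, card_range,
        ← Finset.mul_sum, Finset.sum_const, card_range]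
      simp [Nat.mul_comm]
    have h2 : ∑ i ∈ range n, (4 * i + 2) = 4 * (∑ i ∈ range n, i) + 2 * n := by
      rw [Finset.sum_add_distrib, ← Finset.mul_sum, Finset.sum_const, card_range]
      simp [Nat.mul_comm]
    have hmul : n * (n - 1) + n = n * n := by
      rcases Nat.eq_zero_or_pos n with rfl | h
      · simp
      · have hn1 : n - 1 + 1 = n := by omega
        calc n * (n - 1) + n = n * ((n - 1) + 1) := by ring
          _ = n * n := by rw [hn1]
    omega
  have hsA : n ≤ ∑ i ∈ range n, (Nat.digits 2 (n + 2 * i + 1)).sum := by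
    calc n = ∑ _i ∈ range n, 1 := by simp
    _ ≤ _ := Finset.sum_le_sum fun i _ => s2_pos _ (by omega)
  have hsB : ∑ i ∈ range n, (Nat.digits 2 (4 * i + 2)).sum ≤ (∑ i ∈ range n, i) + n := by
    calc ∑ i ∈ range n, (Nat.digits 2 (4 * i + 2)).sum
        = ∑ i ∈ range n, ((Nat.digits 2 i).sum + 1) :=
          Finset.sum_congr rfl fun i _ => s2_42 i
      _ ≤ ∑ i ∈ range n, (i + 1) :=
          Finset.sum_le_sum fun i _ => by have := s2_le i; omega
      _ = (∑ i ∈ range n, i) + n := by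
          rw [Finset.sum_add_distrib, Finset.sum_const, card_range]; simp
  have hG : n * (n - 1) / 2 = ∑ i ∈ range n, i := by omega
  rw [hG]
  omega

private lemma valOdd (p n : ℕ) (hp : p.Prime) (hp2 : p ≠ 2) :
    ∑ i ∈ range n, padicValNat p (Nat.factorial (n + 2 * i + 1))
      ≤ ∑ i ∈ range n, padicValNat p (Nat.factorial (4 * i + 2)) := by
  haveI : Fact (Nat.Prime p) := ⟨hp⟩
  have hoddp : Odd p := hp.odd_of_ne_two hp2
  have hA : ∀ i ∈ range n, padicValNat p (Nat.factorial (n + 2 * i + 1))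
      = ∑ k ∈ Finset.Ico 1 (4 * n + 2), (n + 2 * i + 1) / p ^ k := by
    intro i hi
    have hi' := Finset.mem_range.mp hi
    exact padicValNat_factorial (lt_of_le_of_lt (Nat.log_le_self p _) (by omega))
  have hB : ∀ i ∈ range n, padicValNat p (Nat.factorial (4 * i + 2))
      = ∑ k ∈ Finset.Ico 1 (4 * n + 2), (4 * i + 2) / p ^ k := by
    intro i hi
    have hi' := Finset.mem_range.mp hi
    exact padicValNat_factorial (lt_of_le_of_lt (Nat.log_le_self p _) (by omega))
  rw [Finset.sum_congr rfl hA, Finset.sum_congr rfl hB, Finset.sum_comm, Finset.sum_comm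
    (s := range n)]
  apply Finset.sum_le_sum
  intro k _
  exact keyLemma (p ^ k) (hoddp.pow) n

private lemma dvdLemma (n : ℕ) :
    (∏ i ∈ range n, Nat.factorial (n + 2 * i + 1))
      ∣ 2 ^ (n * (n - 1) / 2) * ∏ i ∈ range n, Nat.factorial (4 * i + 2) := by
  have hD0 : (∏ i ∈ range n, Nat.factorial (n + 2 * i + 1)) ≠ 0 :=
    Finset.prod_ne_zero_iff.mpr fun i _ => Nat.factorial_ne_zero _
  have hP0 : (∏ i ∈ range n, Nat.factorial (4 * i + 2)) ≠ 0 :=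
    Finset.prod_ne_zero_iff.mpr fun i _ => Nat.factorial_ne_zero _
  have hM0 : 2 ^ (n * (n - 1) / 2) * (∏ i ∈ range n, Nat.factorial (4 * i + 2)) ≠ 0 :=
    mul_ne_zero (pow_ne_zero _ two_ne_zero) hP0
  rw [← Nat.factorization_le_iff_dvd hD0 hM0, Finsupp.le_def]
  intro p
  by_cases hp : p.Prime
  · rw [Nat.factorization_mul (pow_ne_zero _ two_ne_zero) hP0,
      Nat.factorization_prod (fun i _ => Nat.factorial_ne_zero _),
      Nat.factorization_prod (fun i _ => Nat.factorial_ne_zero _),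
      Nat.factorization_pow]
    simp only [Finsupp.add_apply, Finsupp.smul_apply, Finset.sum_apply',
      Nat.factorization_def _ hp, smul_eq_mul]
    rcases eq_or_ne p 2 with rfl | hp2
    · have h2 : padicValNat 2 2 = 1 := padicValNat.self one_lt_two
      rw [h2, mul_one]
      exact val2 n
    · have h2 : padicValNat p 2 = 0 := by
        apply padicValNat.eq_zero_of_not_dvd
        intro h
        exact hp2 ((Nat.prime_dvd_prime_iff_eq hp Nat.prime_two).mp h)
      rw [h2, mul_zero, zero_add]
      exact valOdd p n hp hp2
  · simp [Nat.factorization_eq_zero_of_not_prime _ hp]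

theorem stmt18 (n : ℕ) (hn : 1 ≤ n) :
    ∃ m : ℕ, 0 < m ∧
      ((2 : ℚ) ^ (n*(n-1)/2) *
        ∏ i ∈ Finset.range n, (Nat.factorial (4*i+2) : ℚ) / (Nat.factorial (n+2*i+1) : ℚ))
      = m := by
  set D := ∏ i ∈ range n, Nat.factorial (n + 2 * i + 1) with hD
  set M := 2 ^ (n * (n - 1) / 2) * ∏ i ∈ range n, Nat.factorial (4 * i + 2) with hM
  have hdvd : D ∣ M := dvdLemma n
  have hD0 : 0 < D := Finset.prod_pos fun i _ => Nat.factorial_pos _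
  have hM0 : 0 < M := Nat.mul_pos (Nat.pow_pos (by norm_num)) <|
    Finset.prod_pos fun i _ => Nat.factorial_pos _
  refine ⟨M / D, Nat.div_pos (Nat.le_of_dvd hM0 hdvd) hD0, ?_⟩
  have hcast : ((M / D : ℕ) : ℚ) = (M : ℚ) / (D : ℚ) :=
    Nat.cast_div hdvd (by exact_mod_cast hD0.ne')
  rw [hcast]
  have hMq : (M : ℚ) = (2 : ℚ) ^ (n * (n - 1) / 2)
      * ∏ i ∈ range n, (Nat.factorial (4 * i + 2) : ℚ) := by
    rw [hM]; push_cast; ring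
  have hDq : (D : ℚ) = ∏ i ∈ range n, (Nat.factorial (n + 2 * i + 1) : ℚ) := by
    rw [hD]; push_cast; ring
  rw [hMq, hDq, Finset.prod_div_distrib, mul_div_assoc]
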